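/- Let L be a lattice in a finite-dimensional real vector space V, and let W = span_ℚ(L) be the rational span of L in V. The map sending an L-subspace V' of V to W ∩ V' is a bijection from the set of L-subspaces of V onto the set of ℚ-linear subspaces of W, with inverse given by taking the real span; moreover dim_ℝ V' = dim_ℚ (W ∩ V'). -/

import Mathlib

open Submodule Module

section Aux

variable {V : Type*} [AddCommGroup V] [Module ℝ V] [FiniteDimensional ℝ V]
    [Module ℚ V] [IsScalarTower ℚ ℝ V]

lemma aux_qcast_smul (q : ℚ) (x : V) : (q : ℝ) • x = q • x := by
  rw [← Rat.smul_one_eq_cast, smul_assoc, one_smul]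

lemma aux_qsmul_inj : Function.Injective fun r : ℚ => r • (1 : ℝ) := by
  intro a b h
  simpa [Rat.smul_one_eq_cast] using h

/-- A ℚ-linearly independent family inside the ℚ-span of an ℝ-basis is ℝ-linearly
independent. -/
lemma aux_indep (b : Basis (Fin (Module.finrank ℝ V)) ℝ V)
    {ι : Type*} {v : ι → V} (hmem : ∀ i, v i ∈ Submodule.span ℚ (Set.range ⇑b))
    (hv : LinearIndependent ℚ v) : LinearIndependent ℝ v := by
  set W : Submodule ℚ V := Submodule.span ℚ (Set.range ⇑b) with hWdef
  have hbQ : LinearIndependent ℚ ⇑b :=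
    b.linearIndependent.restrict_scalars aux_qsmul_inj
  let bQ : Basis (Fin (Module.finrank ℝ V)) ℚ W := Basis.span hbQ
  haveI : FiniteDimensional ℚ W := Module.Finite.of_basis bQ
  have hfr : Module.finrank ℚ W = Module.finrank ℝ V := by
    rw [finrank_eq_card_basis bQ, Fintype.card_fin]
  -- the family inside W
  let v' : ι → W := fun i => ⟨v i, hmem i⟩
  have hv' : LinearIndependent ℚ v' :=
    LinearIndependent.of_comp W.subtype hv
  have hs : LinearIndepOn ℚ id (Set.range v') := hv'.linearIndepOn_id
  let t : Set W := hs.extend (Set.subset_univ _)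
  let B : Basis t ℚ W := Basis.extend hs
  haveI : Fintype t := FiniteDimensional.fintypeBasisIndex B
  let u : t → V := fun x => ((x : W) : V)
  have hu_range : Set.range u = W.subtype '' (Set.range ⇑B) := by
    rw [Basis.coe_extend]
    ext x
    constructor
    · rintro ⟨i, rfl⟩
      exact ⟨(i : W), ⟨i, rfl⟩, rfl⟩
    · rintro ⟨y, ⟨i, rfl⟩, rfl⟩
      exact ⟨i, rfl⟩
  have hspan : ⊤ ≤ Submodule.span ℝ (Set.range u) := by
    rw [← b.span_eq]
    refine Submodule.span_le.2 ?_
    rintro x ⟨j, rfl⟩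
    have hbj : (⟨b j, Submodule.subset_span ⟨j, rfl⟩⟩ : W) ∈
        Submodule.span ℚ (Set.range ⇑B) := by
      rw [B.span_eq]; trivial
    have : b j ∈ Submodule.map W.subtype (Submodule.span ℚ (Set.range ⇑B)) :=
      ⟨_, hbj, rfl⟩
    rw [Submodule.map_span, ← hu_range] at this
    exact Submodule.span_le_restrictScalars ℚ ℝ (Set.range u) this
  have hcard : Fintype.card t = Module.finrank ℝ V := by
    rw [← hfr, finrank_eq_card_basis B]
  have hu : LinearIndependent ℝ u :=
    linearIndependent_of_top_le_span_of_card_eq_finrank hspan hcard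
  let g : ι → t := fun i =>
    ⟨v' i, hs.subset_extend (Set.subset_univ _) ⟨i, rfl⟩⟩
  have hg : Function.Injective g := by
    intro i j h
    have : v' i = v' j := congrArg Subtype.val h
    exact hv'.injective this
  have : u ∘ g = v := rfl
  exact this ▸ hu.comp g hg

/-- Key lemma: for `W' ≤ span ℚ (range b)`, the intersection of the real span of `W'`
with the rational span of `b` is `W'`, and the real and rational dimensions agree. -/
lemma aux_two (b : Basis (Fin (Module.finrank ℝ V)) ℝ V)
    (W' : Submodule ℚ V) (hW' : W' ≤ Submodule.span ℚ (Set.range ⇑b)) :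
    Submodule.span ℚ (Set.range ⇑b) ⊓
        (Submodule.span ℝ (W' : Set V)).restrictScalars ℚ ≤ W' ∧
    Module.finrank ℝ (Submodule.span ℝ (W' : Set V)) = Module.finrank ℚ W' := by
  have hbQ : LinearIndependent ℚ ⇑b :=
    b.linearIndependent.restrict_scalars aux_qsmul_inj
  let bQ : Basis (Fin (Module.finrank ℝ V)) ℚ (Submodule.span ℚ (Set.range ⇑b)) :=
    Basis.span hbQ
  haveI : FiniteDimensional ℚ (Submodule.span ℚ (Set.range ⇑b)) :=
    Module.Finite.of_basis bQ
  haveI : FiniteDimensional ℚ W' := Submodule.finiteDimensional_of_le hW'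
  set d := Module.finrank ℚ W' with hd
  let c : Basis (Fin d) ℚ W' := Module.finBasis ℚ W'
  let vc : Fin d → V := fun i => ((c i : W') : V)
  have hvc : LinearIndependent ℚ vc :=
    c.linearIndependent.map' W'.subtype (Submodule.ker_subtype W')
  have hmem : ∀ i, vc i ∈ Submodule.span ℚ (Set.range ⇑b) := fun i => hW' (c i).2
  have hR : LinearIndependent ℝ vc := aux_indep b hmem hvc
  -- W' is the ℚ-span of vc
  have hQspan : W' = Submodule.span ℚ (Set.range vc) := by
    apply le_antisymm
    · intro w hw
      have h1 : (⟨w, hw⟩ : W') ∈ Submodule.span ℚ (Set.range ⇑c) := by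
        rw [c.span_eq]; trivial
      have h2 : w ∈ Submodule.map W'.subtype (Submodule.span ℚ (Set.range ⇑c)) :=
        ⟨_, h1, rfl⟩
      rw [Submodule.map_span] at h2
      have himg : W'.subtype '' Set.range ⇑c = Set.range vc := by
        ext x
        constructor
        · rintro ⟨y, ⟨i, rfl⟩, rfl⟩; exact ⟨i, rfl⟩
        · rintro ⟨i, rfl⟩; exact ⟨c i, ⟨i, rfl⟩, rfl⟩
      rwa [himg] at h2
    · refine Submodule.span_le.2 ?_
      rintro x ⟨i, rfl⟩
      exact (c i).2
  have hRspan : Submodule.span ℝ (W' : Set V) = Submodule.span ℝ (Set.range vc) := by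
    apply le_antisymm
    · refine Submodule.span_le.2 ?_
      intro w hw
      have : w ∈ Submodule.span ℚ (Set.range vc) := hQspan ▸ hw
      exact Submodule.span_le_restrictScalars ℚ ℝ (Set.range vc) this
    · refine Submodule.span_le.2 ?_
      rintro x ⟨i, rfl⟩
      exact Submodule.subset_span (c i).2
  constructor
  · rintro x ⟨hx2, hx1⟩
    have hx1' : x ∈ Submodule.span ℝ (W' : Set V) := hx1
    by_contra hxW'
    have hxnot : x ∉ Submodule.span ℚ (Set.range vc) := fun h => hxW' (hQspan ▸ h)
    have hcons : LinearIndependent ℚ (Fin.cons x vc) :=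
      linearIndependent_fin_cons.2 ⟨hvc, hxnot⟩
    have hmem' : ∀ i, (Fin.cons x vc : Fin (d+1) → V) i ∈
        Submodule.span ℚ (Set.range ⇑b) := by
      intro i
      refine Fin.cases ?_ ?_ i
      · exact hx2
      · exact fun j => hmem j
    have hconsR : LinearIndependent ℝ (Fin.cons x vc) := aux_indep b hmem' hcons
    have : x ∉ Submodule.span ℝ (Set.range vc) :=
      (linearIndependent_fin_cons.1 hconsR).2
    exact this (hRspan ▸ hx1')
  · rw [hRspan, finrank_span_eq_card hR, Fintype.card_fin]

lemma aux_denom (L : AddSubgroup V) {w : V}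
    (hw : w ∈ Submodule.span ℚ (L : Set V)) :
    ∃ N : ℤ, N ≠ 0 ∧ (N : ℚ) • w ∈ L := by
  have hzs : ∀ (m : ℤ) (x : V), x ∈ L → (m : ℚ) • x ∈ L := fun m x hx => by
    rw [Int.cast_smul_eq_zsmul]; exact AddSubgroup.zsmul_mem L hx m
  induction hw using Submodule.span_induction with
  | mem x hx => exact ⟨1, one_ne_zero, by simpa using hx⟩
  | zero => exact ⟨1, one_ne_zero, by simpa using L.zero_mem⟩
  | add x y hx hy ihx ihy =>
    obtain ⟨N₁, h₁, hN₁⟩ := ihx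
    obtain ⟨N₂, h₂, hN₂⟩ := ihy
    refine ⟨N₁ * N₂, mul_ne_zero h₁ h₂, ?_⟩
    rw [smul_add]
    have e1 : ((N₁ * N₂ : ℤ) : ℚ) • x = ((N₂ : ℤ) : ℚ) • (((N₁ : ℤ) : ℚ) • x) := by
      rw [smul_smul]; push_cast; ring_nf
    have e2 : ((N₁ * N₂ : ℤ) : ℚ) • y = ((N₁ : ℤ) : ℚ) • (((N₂ : ℤ) : ℚ) • y) := by
      rw [smul_smul]; push_cast; ring_nf
    rw [e1, e2]
    exact L.add_mem (hzs N₂ _ hN₁) (hzs N₁ _ hN₂)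
  | smul q x hx ih =>
    obtain ⟨N, hN0, hNx⟩ := ih
    refine ⟨N * q.den, mul_ne_zero hN0 (Int.natCast_ne_zero.2 q.den_nz), ?_⟩
    have hq : (q.den : ℚ) * q = (q.num : ℚ) := by
      rw [mul_comm, Rat.mul_den_eq_num]
    have e : ((N * (q.den : ℤ) : ℤ) : ℚ) • (q • x) =
        ((q.num : ℤ) : ℚ) • (((N : ℤ) : ℚ) • x) := by
      rw [smul_smul, smul_smul]
      congr 1
      push_cast
      rw [mul_assoc, hq]
      ring
    rw [e]
    exact hzs q.num _ hNx

end Aux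

theorem stmt12 {V : Type*} [AddCommGroup V] [Module ℝ V] [FiniteDimensional ℝ V]
    [Module ℚ V] [IsScalarTower ℚ ℝ V]
    (L : AddSubgroup V)
    (hL : ∃ b : Basis (Fin (Module.finrank ℝ V)) ℝ V,
      L = AddSubgroup.closure (Set.range ⇑b))
    (W : Submodule ℚ V) (hW : W = Submodule.span ℚ (L : Set V)) :
    ∃ e : {V' : Submodule ℝ V // V' = Submodule.span ℝ ((L : Set V) ∩ (V' : Set V))} ≃
          {W' : Submodule ℚ V // W' ≤ W},
      (∀ V', (e V').1 = W ⊓ V'.1.restrictScalars ℚ) ∧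
      (∀ W', (e.symm W').1 = Submodule.span ℝ (W'.1 : Set V)) ∧
      (∀ V', Module.finrank ℝ V'.1 = Module.finrank ℚ (e V').1) := by
  obtain ⟨b, hb⟩ := hL
  -- W is the ℚ-span of the range of b
  have hLW : (L : Set V) ⊆ (W : Set V) := by
    rw [hW]; exact Submodule.subset_span
  have hWb : W = Submodule.span ℚ (Set.range ⇑b) := by
    rw [hW, hb]
    apply le_antisymm
    · refine Submodule.span_le.2 ?_
      have : AddSubgroup.closure (Set.range ⇑b) ≤
          (Submodule.span ℚ (Set.range ⇑b)).toAddSubgroup :=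
        (AddSubgroup.closure_le _).2 Submodule.subset_span
      exact this
    · exact Submodule.span_mono AddSubgroup.subset_closure
  -- clearing denominators
  have hdenom : ∀ w ∈ W, ∃ N : ℤ, N ≠ 0 ∧ (N : ℚ) • w ∈ L := by
    intro w hw
    exact aux_denom L (hW ▸ hw)
  -- the inverse map is well-defined
  have hg : ∀ W' : {W' : Submodule ℚ V // W' ≤ W},
      Submodule.span ℝ (W'.1 : Set V) =
        Submodule.span ℝ ((L : Set V) ∩ (Submodule.span ℝ (W'.1 : Set V) : Set V)) := by
    rintro ⟨W', hW'⟩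
    apply le_antisymm
    · refine Submodule.span_le.2 ?_
      intro w hw
      obtain ⟨N, hN0, hNw⟩ := hdenom w (hW' hw)
      have hNR : ((N : ℚ) : ℝ) • w ∈ Submodule.span ℝ (W' : Set V) :=
        Submodule.smul_mem _ _ (Submodule.subset_span hw)
      rw [aux_qcast_smul] at hNR
      have hmem : (N : ℚ) • w ∈ (L : Set V) ∩
          (Submodule.span ℝ (W' : Set V) : Set V) := ⟨hNw, hNR⟩
      have h2 : (N : ℚ) • w ∈ Submodule.span ℝ ((L : Set V) ∩
          (Submodule.span ℝ (W' : Set V) : Set V)) := Submodule.subset_span hmem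
      have h3 := Submodule.smul_mem _ (((N : ℚ)⁻¹ : ℚ) : ℝ) h2
      rwa [aux_qcast_smul, smul_smul, inv_mul_cancel₀ (by exact_mod_cast hN0),
        one_smul] at h3
    · refine Submodule.span_le.2 ?_
      intro x hx
      exact hx.2
  -- definition of the equivalence
  refine ⟨{
      toFun := fun V' => ⟨W ⊓ V'.1.restrictScalars ℚ, inf_le_left⟩
      invFun := fun W' => ⟨Submodule.span ℝ (W'.1 : Set V), hg W'⟩
      left_inv := ?_
      right_inv := ?_ }, fun V' => rfl, fun W' => rfl, ?_⟩
  · -- span ℝ (W ⊓ V') = V'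
    rintro ⟨V', hV'⟩
    ext1
    apply le_antisymm
    · refine Submodule.span_le.2 ?_
      intro x hx
      exact hx.2
    · refine le_trans (le_of_eq hV') (Submodule.span_le.2 ?_)
      rintro x ⟨hxL, hxV'⟩
      exact Submodule.subset_span ⟨hLW hxL, hxV'⟩
  · -- W ⊓ span ℝ W' = W'
    rintro ⟨W', hW'⟩
    ext1
    apply le_antisymm
    · have := (aux_two b W' (hWb ▸ hW')).1
      rwa [← hWb] at this
    · exact le_inf hW' (fun x hx => Submodule.subset_span hx)
  · -- finrank
    rintro ⟨V', hV'⟩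
    have key := aux_two b (W ⊓ V'.restrictScalars ℚ) (hWb ▸ inf_le_left)
    have hspan : Submodule.span ℝ ((W ⊓ V'.restrictScalars ℚ : Submodule ℚ V) : Set V)
        = V' := by
      apply le_antisymm
      · refine Submodule.span_le.2 ?_
        intro x hx
        exact hx.2
      · refine le_trans (le_of_eq hV') (Submodule.span_le.2 ?_)
        rintro x ⟨hxL, hxV'⟩
        exact Submodule.subset_span ⟨hLW hxL, hxV'⟩
    have := key.2
    rw [hspan] at this
    exact this
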